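/- Let N ≥ 1, let κ, η ∈ ℂ∖{0}, let μ₁, …, μ_N be pairwise distinct complex numbers and ν₁, …, ν_{N−1} be pairwise distinct complex numbers such that κη⁻¹μ_i ≠ κ⁻¹ν_j for all i, j. For I ⊆ {1,…,N} define c_I(μ) := ∏_{i∈I, j∈{1,…,N}∖I} (κη⁻¹μ_i − ηκ⁻¹μ_j)/(μ_i − μ_j) and Π_I(μ,ν) := ∏_{i∈I} ∏_{j=1}^{N−1} (μ_i − η⁻¹ν_j)/(κη⁻¹μ_i − κ⁻¹ν_j); for I ⊆ {1,…,N−1} define c̄_I(ν) := ∏_{i∈I, j∈{1,…,N−1}∖I} (κη⁻¹ν_j − ηκ⁻¹ν_i)/(ν_j − ν_i) and Π̄_I(μ,ν) := ∏_{i∈I} ∏_{j=1}^{N} (μ_j − η⁻¹ν_i)/(κη⁻¹μ_j − κ⁻¹ν_i). Then for every 0 ≤ r ≤ N: Σ_{I ⊆ {1,…,N}, |I| = r} c_I(μ)·Π_I(μ,ν) = Σ_{I ⊆ {1,…,N−1}, |I| = r} c̄_I(ν)·Π̄_I(μ,ν) + Σ_{I ⊆ {1,…,N−1}, |I| = r−1}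 c̄_I(ν)·Π̄_I(μ,ν). -/

import Mathlib

noncomputable section
open Finset Polynomial
namespace Bifund
local instance : DecidableEq ℂ := Classical.decEq ℂ
def cc (t : ℂ) (A I : Finset ℂ) : ℂ := ∏ i ∈ I, ∏ j ∈ A \ I, (i - t*j)/(i - j)
def cb (t : ℂ) (B I : Finset ℂ) : ℂ := ∏ i ∈ I, ∏ j ∈ B \ I, (j - t*i)/(j - i)
def PP (t : ℂ) (B I : Finset ℂ) : ℂ := ∏ i ∈ I, ∏ j ∈ B, (i - j)/(i - t*j)
def Pb (t : ℂ) (A I : Finset ℂ) : ℂ := ∏ i ∈ I, ∏ j ∈ A, (j - i)/(j - t*i)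
def S (t : ℂ) (A B : Finset ℂ) (r : ℕ) : ℂ := ∑ I ∈ A.powersetCard r, cc t A I * PP t B I
def Sb (t : ℂ) (A B : Finset ℂ) (r : ℕ) : ℂ := ∑ I ∈ B.powersetCard r, cb t B I * Pb t A I
def Pout (t : ℂ) (A B : Finset ℂ) (k : ℕ) : ℂ[X] :=
  ∑ I ∈ A.powersetCard k, C (cc t A I * PP t B I) *
    ((∏ i ∈ I, (C t * X - C i)) * ((∏ j ∈ A \ I, (X - C j)) * ∏ b ∈ B, (X - C (t*b))))
def Pin (t : ℂ) (A B : Finset ℂ) (k : ℕ) : ℂ[X] :=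
  ∑ I ∈ A.powersetCard k, C (cc t A I * PP t B I) *
    ((∏ j ∈ A \ I, (X - C (t*j))) * ((∏ i ∈ I, (X - C i)) * ∏ b ∈ B, (X - C b)))
def PSb (t : ℂ) (A B : Finset ℂ) (k : ℕ) : ℂ[X] :=
  ∑ I ∈ B.powersetCard k, C (cb t B I * Pb t A I) *
    ((∏ i ∈ I, (X - C i)) * ((∏ b ∈ B \ I, (X - C (t*b))) * ∏ j ∈ A, (X - C j)))

def Q (t : ℂ) (A B : Finset ℂ) : ℂ[X] := (∏ j ∈ A, (X - C j)) * ∏ b ∈ B, (X - C (t*b))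

lemma eval_Q (t x : ℂ) (A B : Finset ℂ) :
    (Q t A B).eval x = (∏ j ∈ A, (x - j)) * ∏ b ∈ B, (x - t*b) := by
  simp [Q, eval_prod]

lemma insert_sdiff' {x : ℂ} {A I : Finset ℂ} (hx : x ∉ A) (hI : I ⊆ A) :
    (insert x A) \ I = insert x (A \ I) := by
  ext y
  simp only [mem_sdiff, mem_insert]
  constructor
  · rintro ⟨h1 | h1, h2⟩
    · exact Or.inl h1
    · exact Or.inr ⟨h1, h2⟩
  · rintro (rfl | ⟨h1, h2⟩)
    · exact ⟨Or.inl rfl, fun hy => hx (hI hy)⟩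
    · exact ⟨Or.inr h1, h2⟩

lemma insert_sdiff_insert' {x : ℂ} {A I : Finset ℂ} (hx : x ∉ A) (hI : I ⊆ A) :
    (insert x A) \ (insert x I) = A \ I := by
  ext y
  simp only [mem_sdiff, mem_insert, not_or]
  constructor
  · rintro ⟨h1 | h1, h2, h3⟩
    · exact absurd h1 h2
    · exact ⟨h1, h3⟩
  · rintro ⟨h1, h2⟩
    exact ⟨Or.inr h1, fun hy => hx (hy ▸ h1), h2⟩

lemma cc_insert {t x : ℂ} {A I : Finset ℂ} (hx : x ∉ A) (hI : I ⊆ A) :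
    cc t (insert x A) I = (∏ i ∈ I, (i - t*x)/(i - x)) * cc t A I := by
  unfold cc
  rw [insert_sdiff' hx hI, ← prod_mul_distrib]
  refine prod_congr rfl fun i hi => ?_
  rw [prod_insert (fun h => hx (mem_sdiff.1 h).1)]

lemma cc_insert_mem {t x : ℂ} {A I : Finset ℂ} (hx : x ∉ A) (hI : I ⊆ A) :
    cc t (insert x A) (insert x I) = (∏ j ∈ A \ I, (x - t*j)/(x - j)) * cc t A I := by
  unfold cc
  rw [prod_insert (fun h => hx (hI h)), insert_sdiff_insert' hx hI]

lemma PP_insert {t x : ℂ} {B I : Finset ℂ} (hx : x ∉ I) :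
    PP t B (insert x I) = (∏ b ∈ B, (x - b)/(x - t*b)) * PP t B I := by
  unfold PP; rw [prod_insert hx]

lemma Pb_insert {t x : ℂ} {A : Finset ℂ} (I : Finset ℂ) (hx : x ∉ A) :
    Pb t (insert x A) I = (∏ i ∈ I, (x - i)/(x - t*i)) * Pb t A I := by
  unfold Pb
  rw [← prod_mul_distrib]
  exact prod_congr rfl fun i _ => prod_insert hx

lemma S_rep (t x : ℂ) (A B : Finset ℂ) (hx : x ∉ A) (hxB : ∀ b ∈ B, x ≠ t * b) (r : ℕ) :
    S t (insert x A) B (r+1) * (Q t A B).eval x = (Pout t A B (r+1) + Pin t A B r).eval x := by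
  have hdisj : Disjoint (A.powersetCard (r+1)) ((A.powersetCard r).image (insert x)) := by
    rw [Finset.disjoint_left]
    intro I hI hI'
    obtain ⟨J, _, rfl⟩ := mem_image.1 hI'
    exact hx ((mem_powersetCard.1 hI).1 (mem_insert_self x J))
  have hinj : ∀ I ∈ A.powersetCard r, ∀ J ∈ A.powersetCard r, insert x I = insert x J → I = J := by
    intro I hI J hJ h
    have hxI : x ∉ I := fun h' => hx ((mem_powersetCard.1 hI).1 h')
    have hxJ : x ∉ J := fun h' => hx ((mem_powersetCard.1 hJ).1 h')
    rw [← Finset.erase_insert hxI, ← Finset.erase_insert hxJ, h]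
  rw [S, powersetCard_succ_insert hx, sum_union hdisj, Finset.sum_image hinj, eval_add,
    add_mul]
  congr 1
  · -- out part
    rw [Pout, eval_finset_sum, Finset.sum_mul]
    refine sum_congr rfl fun I hI => ?_
    obtain ⟨hIA, hIc⟩ := mem_powersetCard.1 hI
    have key : (∏ i ∈ I, (i - t*x)/(i - x)) * (∏ i ∈ I, (x - i)) = ∏ i ∈ I, (t*x - i) := by
      rw [← prod_mul_distrib]
      refine prod_congr rfl fun i hi => ?_
      have h0 : i - x ≠ 0 := sub_ne_zero.2 (fun h => hx (h ▸ hIA hi))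
      field_simp
      ring
    calc cc t (insert x A) I * PP t B I * (Q t A B).eval x
        = cc t A I * PP t B I *
            (((∏ i ∈ I, (i - t*x)/(i - x)) * (∏ i ∈ I, (x - i))) *
              ((∏ j ∈ A \ I, (x - j)) * ∏ b ∈ B, (x - t*b))) := by
          rw [cc_insert hx hIA, eval_Q, ← prod_sdiff hIA]
          ring
      _ = cc t A I * PP t B I *
            ((∏ i ∈ I, (t*x - i)) * ((∏ j ∈ A \ I, (x - j)) * ∏ b ∈ B, (x - t*b))) := by
          rw [key]
      _ = eval x (C (cc t A I * PP t B I) *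
            ((∏ i ∈ I, (C t * X - C i)) * ((∏ j ∈ A \ I, (X - C j)) * ∏ b ∈ B, (X - C (t*b))))) := by
          simp [eval_prod]
  · -- in part
    rw [Pin, eval_finset_sum, Finset.sum_mul]
    refine sum_congr rfl fun J hJ => ?_
    obtain ⟨hJA, hJc⟩ := mem_powersetCard.1 hJ
    have hxJ : x ∉ J := fun h' => hx (hJA h')
    have key1 : (∏ j ∈ A \ J, (x - t*j)/(x - j)) * (∏ j ∈ A \ J, (x - j)) = ∏ j ∈ A \ J, (x - t*j) := by
      rw [← prod_mul_distrib]
      refine prod_congr rfl fun j hj => ?_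
      have h0 : x - j ≠ 0 := sub_ne_zero.2 (fun h => hx (h ▸ (mem_sdiff.1 hj).1))
      field_simp
    have key2 : (∏ b ∈ B, (x - b)/(x - t*b)) * (∏ b ∈ B, (x - t*b)) = ∏ b ∈ B, (x - b) := by
      rw [← prod_mul_distrib]
      refine prod_congr rfl fun b hb => ?_
      have h0 : x - t*b ≠ 0 := sub_ne_zero.2 (hxB b hb)
      exact div_mul_cancel₀ _ h0
    calc cc t (insert x A) (insert x J) * PP t B (insert x J) * (Q t A B).eval x
        = cc t A J * PP t B J *
            ((((∏ j ∈ A \ J, (x - t*j)/(x - j)) * (∏ j ∈ A \ J, (x - j)))) *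
              (((∏ b ∈ B, (x - b)/(x - t*b)) * (∏ b ∈ B, (x - t*b))) * ∏ j ∈ J, (x - j))) := by
          rw [cc_insert_mem hx hJA, PP_insert hxJ, eval_Q, ← prod_sdiff hJA]
          ring
      _ = cc t A J * PP t B J *
            ((∏ j ∈ A \ J, (x - t*j)) * ((∏ j ∈ J, (x - j)) * ∏ b ∈ B, (x - b))) := by
          rw [key1, key2]; ring
      _ = eval x (C (cc t A J * PP t B J) *
            ((∏ j ∈ A \ J, (X - C (t*j))) * ((∏ i ∈ J, (X - C i)) * ∏ b ∈ B, (X - C b)))) := by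
          simp [eval_prod]

lemma Sb_rep (t x : ℂ) (A B : Finset ℂ) (hx : x ∉ A) (hxB : ∀ b ∈ B, x ≠ t * b) (k : ℕ) :
    Sb t (insert x A) B k * (Q t A B).eval x = (PSb t A B k).eval x := by
  rw [Sb, PSb, eval_finset_sum, Finset.sum_mul]
  refine sum_congr rfl fun I hI => ?_
  obtain ⟨hIB, hIc⟩ := mem_powersetCard.1 hI
  have key : (∏ i ∈ I, (x - i)/(x - t*i)) * (∏ i ∈ I, (x - t*i)) = ∏ i ∈ I, (x - i) := by
    rw [← prod_mul_distrib]
    refine prod_congr rfl fun i hi => ?_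
    have h0 : x - t*i ≠ 0 := sub_ne_zero.2 (hxB i (hIB hi))
    exact div_mul_cancel₀ _ h0
  calc cb t B I * Pb t (insert x A) I * (Q t A B).eval x
      = cb t B I * Pb t A I *
          ((((∏ i ∈ I, (x - i)/(x - t*i)) * (∏ i ∈ I, (x - t*i)))) *
            ((∏ b ∈ B \ I, (x - t*b)) * ∏ j ∈ A, (x - j))) := by
        rw [Pb_insert I hx, eval_Q, ← prod_sdiff hIB]
        ring
    _ = cb t B I * Pb t A I *
          ((∏ i ∈ I, (x - i)) * ((∏ b ∈ B \ I, (x - t*b)) * ∏ j ∈ A, (x - j))) := by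
        rw [key]
    _ = eval x (C (cb t B I * Pb t A I) *
          ((∏ i ∈ I, (X - C i)) * ((∏ b ∈ B \ I, (X - C (t*b))) * ∏ j ∈ A, (X - C j)))) := by
        simp [eval_prod]


-- ## evaluation at β ∈ B

lemma Pin_eval_b {t β : ℂ} {A B : Finset ℂ} (hβ : β ∈ B) (k : ℕ) :
    (Pin t A B k).eval β = 0 := by
  rw [Pin, eval_finset_sum]
  refine sum_eq_zero fun I hI => ?_
  have : (∏ b ∈ B, (X - C b) : ℂ[X]).eval β = 0 := by
    rw [eval_prod]
    exact prod_eq_zero hβ (by simp)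
  simp [this]

lemma Pout_eval_b {t β : ℂ} {A B : Finset ℂ} (hβ : β ∈ B)
    (hd : ∀ a ∈ A, ∀ b ∈ B, a ≠ t * b) (k : ℕ) :
    (Pout t A B k).eval β =
      ((∏ j ∈ A, (β - j)) * ∏ b ∈ B, (β - t*b)) * S t A (B.erase β) k := by
  rw [Pout, eval_finset_sum, S, Finset.mul_sum]
  refine sum_congr rfl fun I hI => ?_
  obtain ⟨hIA, hIc⟩ := mem_powersetCard.1 hI
  have hPP : PP t B I = (∏ i ∈ I, (i - β)/(i - t*β)) * PP t (B.erase β) I := by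
    unfold PP
    rw [← prod_mul_distrib]
    exact prod_congr rfl fun i _ => (Finset.mul_prod_erase B _ hβ).symm
  have key : (∏ i ∈ I, (i - β)/(i - t*β)) * (∏ i ∈ I, (t*β - i)) = ∏ i ∈ I, (β - i) := by
    rw [← prod_mul_distrib]
    refine prod_congr rfl fun i hi => ?_
    have h0 : i - t*β ≠ 0 := sub_ne_zero.2 (hd i (hIA hi) β hβ)
    rw [← neg_sub i (t*β), mul_neg, div_mul_cancel₀ _ h0, neg_sub]
  have hsd : (∏ i ∈ I, (β - i)) * (∏ j ∈ A \ I, (β - j)) = ∏ j ∈ A, (β - j) := by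
    rw [mul_comm, prod_sdiff hIA]
  calc eval β (C (cc t A I * PP t B I) *
        ((∏ i ∈ I, (C t * X - C i)) * ((∏ j ∈ A \ I, (X - C j)) * ∏ b ∈ B, (X - C (t*b)))))
      = cc t A I * ((∏ i ∈ I, (i - β)/(i - t*β)) * PP t (B.erase β) I) *
          ((∏ i ∈ I, (t*β - i)) * ((∏ j ∈ A \ I, (β - j)) * ∏ b ∈ B, (β - t*b))) := by
        rw [← hPP]; simp [eval_prod]
    _ = (cc t A I * PP t (B.erase β) I) *
          ((((∏ i ∈ I, (i - β)/(i - t*β)) * (∏ i ∈ I, (t*β - i))) * (∏ j ∈ A \ I, (β - j))) *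
            ∏ b ∈ B, (β - t*b)) := by ring
    _ = ((∏ j ∈ A, (β - j)) * ∏ b ∈ B, (β - t*b)) * (cc t A I * PP t (B.erase β) I) := by
        rw [key, hsd]; ring

lemma PSb_eval_b {t β : ℂ} {A B : Finset ℂ} (hβ : β ∈ B) (k : ℕ) :
    (PSb t A B k).eval β =
      ((∏ j ∈ A, (β - j)) * ∏ b ∈ B, (β - t*b)) * Sb t A (B.erase β) k := by
  rw [PSb, eval_finset_sum, Sb, Finset.mul_sum]
  rw [← Finset.sum_subset (powersetCard_mono (erase_subset β B) (n := k))]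
  · refine sum_congr rfl fun I hI => ?_
    obtain ⟨hIB', hIc⟩ := mem_powersetCard.1 hI
    have hβI : β ∉ I := fun h => (mem_erase.1 (hIB' h)).1 rfl
    have hIB : I ⊆ B := hIB'.trans (erase_subset β B)
    have hsplit : B \ I = insert β ((B.erase β) \ I) := by
      ext y
      simp only [mem_sdiff, mem_insert, mem_erase]
      constructor
      · rintro ⟨h1, h2⟩
        by_cases hy : y = β
        · exact Or.inl hy
        · exact Or.inr ⟨⟨hy, h1⟩, h2⟩
      · rintro (rfl | ⟨⟨h1, h2⟩, h3⟩)
        · exact ⟨hβ, hβI⟩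
        · exact ⟨h2, h3⟩
    have hcb : cb t B I = (∏ i ∈ I, (β - t*i)/(β - i)) * cb t (B.erase β) I := by
      unfold cb
      rw [hsplit, ← prod_mul_distrib]
      refine prod_congr rfl fun i hi => ?_
      rw [prod_insert (by simp)]
    have key : (∏ i ∈ I, (β - t*i)/(β - i)) * (∏ i ∈ I, (β - i)) = ∏ i ∈ I, (β - t*i) := by
      rw [← prod_mul_distrib]
      refine prod_congr rfl fun i hi => ?_
      have h0 : β - i ≠ 0 := sub_ne_zero.2 fun h => (mem_erase.1 (hIB' hi)).1 h.symm
      field_simp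
    have hsd : (∏ b ∈ B \ I, (β - t*b)) * (∏ i ∈ I, (β - t*i)) = ∏ b ∈ B, (β - t*b) :=
      prod_sdiff hIB
    calc eval β (C (cb t B I * Pb t A I) *
          ((∏ i ∈ I, (X - C i)) * ((∏ b ∈ B \ I, (X - C (t*b))) * ∏ j ∈ A, (X - C j))))
        = ((∏ i ∈ I, (β - t*i)/(β - i)) * cb t (B.erase β) I) * Pb t A I *
            ((∏ i ∈ I, (β - i)) * ((∏ b ∈ B \ I, (β - t*b)) * ∏ j ∈ A, (β - j))) := by
          rw [← hcb]; simp [eval_prod]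
      _ = (cb t (B.erase β) I * Pb t A I) *
            ((((∏ i ∈ I, (β - t*i)/(β - i)) * (∏ i ∈ I, (β - i))) * (∏ b ∈ B \ I, (β - t*b))) *
              ∏ j ∈ A, (β - j)) := by ring
      _ = ((∏ j ∈ A, (β - j)) * ∏ b ∈ B, (β - t*b)) * (cb t (B.erase β) I * Pb t A I) := by
          rw [key, mul_comm (∏ i ∈ I, (β - t*i)) (∏ b ∈ B \ I, (β - t*b)), hsd]; ring
  · intro I hI hnI
    obtain ⟨hIB, hIc⟩ := mem_powersetCard.1 hI
    have hβI : β ∈ I := by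
      by_contra hβI
      exact hnI (mem_powersetCard.2 ⟨fun y hy => mem_erase.2 ⟨fun h => hβI (h ▸ hy), hIB hy⟩, hIc⟩)
    have : (∏ i ∈ I, (X - C i) : ℂ[X]).eval β = 0 := by
      rw [eval_prod]; exact prod_eq_zero hβI (by simp)
    simp [this]

-- ## evaluation at α ∈ A

lemma PSb_eval_a {t α : ℂ} {A B : Finset ℂ} (hα : α ∈ A) (k : ℕ) :
    (PSb t A B k).eval α = 0 := by
  rw [PSb, eval_finset_sum]
  refine sum_eq_zero fun I hI => ?_
  have : (∏ j ∈ A, (X - C j) : ℂ[X]).eval α = 0 := by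
    rw [eval_prod]; exact prod_eq_zero hα (by simp)
  simp [this]
end Bifund

namespace Bifund

lemma pair_scalar {t α : ℂ} {A B J : Finset ℂ} (hα : α ∈ A) (hJ : J ⊆ A.erase α)
    (hd : ∀ a ∈ A, ∀ b ∈ B, a ≠ t * b) :
    cc t A (insert α J) * PP t B (insert α J) *
      ((∏ i ∈ insert α J, (t*α - i)) * ((∏ j ∈ A \ insert α J, (α - j)) * ∏ b ∈ B, (α - t*b))) +
    cc t A J * PP t B J *
      ((∏ j ∈ A \ J, (α - t*j)) * ((∏ i ∈ J, (α - i)) * ∏ b ∈ B, (α - b))) = 0 := by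
  have hαJ : α ∉ J := fun h => (mem_erase.1 (hJ h)).1 rfl
  have hJA : J ⊆ A := hJ.trans (erase_subset α A)
  have hαK : α ∉ A \ insert α J := fun h => (mem_sdiff.1 h).2 (mem_insert_self α J)
  have hKA : ∀ j ∈ A \ insert α J, j ≠ α :=
    fun j hj h => (mem_sdiff.1 hj).2 (mem_insert.2 (Or.inl h))
  have hAJ : A \ J = insert α (A \ insert α J) := by
    ext y
    simp only [mem_sdiff, mem_insert, not_or]
    constructor
    · rintro ⟨h1, h2⟩
      by_cases hy : y = α
      · exact Or.inl hy
      · exact Or.inr ⟨h1, hy, h2⟩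
    · rintro (rfl | ⟨h1, _, h3⟩)
      · exact ⟨hα, hαJ⟩
      · exact ⟨h1, h3⟩
  have hccI : cc t A (insert α J) =
      (∏ j ∈ A \ insert α J, (α - t*j)/(α - j)) *
        ∏ i ∈ J, ∏ j ∈ A \ insert α J, (i - t*j)/(i - j) := by
    unfold cc; rw [prod_insert hαJ]
  have hccJ : cc t A J =
      (∏ i ∈ J, (i - t*α)/(i - α)) *
        ∏ i ∈ J, ∏ j ∈ A \ insert α J, (i - t*j)/(i - j) := by
    unfold cc
    rw [hAJ, ← prod_mul_distrib]
    exact prod_congr rfl fun i _ => prod_insert hαK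
  have hPPI : PP t B (insert α J) = (∏ b ∈ B, (α - b)/(α - t*b)) * PP t B J := by
    unfold PP; rw [prod_insert hαJ]
  have key0 : (∏ b ∈ B, (α - b)/(α - t*b)) * ∏ b ∈ B, (α - t*b) = ∏ b ∈ B, (α - b) := by
    rw [← prod_mul_distrib]
    exact prod_congr rfl fun b hb =>
      div_mul_cancel₀ _ (sub_ne_zero.2 (hd α hα b hb))
  have key1 : (∏ j ∈ A \ insert α J, (α - t*j)/(α - j)) * ∏ j ∈ A \ insert α J, (α - j) =
      ∏ j ∈ A \ insert α J, (α - t*j) := by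
    rw [← prod_mul_distrib]
    exact prod_congr rfl fun j hj =>
      div_mul_cancel₀ _ (sub_ne_zero.2 fun h => (hKA j hj) h.symm)
  have key2 : (∏ i ∈ J, (i - t*α)/(i - α)) * ∏ i ∈ J, (α - i) = ∏ i ∈ J, (t*α - i) := by
    rw [← prod_mul_distrib]
    refine prod_congr rfl fun i hi => ?_
    have h0 : i - α ≠ 0 := sub_ne_zero.2 (mem_erase.1 (hJ hi)).1
    field_simp
    ring
  have prodJ : ∏ i ∈ insert α J, (t*α - i) = (t*α - α) * ∏ i ∈ J, (t*α - i) :=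
    prod_insert hαJ
  have prodK : ∏ j ∈ A \ J, (α - t*j) = (α - t*α) * ∏ j ∈ A \ insert α J, (α - t*j) := by
    rw [hAJ, prod_insert hαK]
  rw [hccI, hccJ, hPPI, prodJ, prodK]
  set W := ∏ i ∈ J, ∏ j ∈ A \ insert α J, (i - t*j)/(i - j)
  calc (∏ j ∈ A \ insert α J, (α - t*j)/(α - j)) * W *
        ((∏ b ∈ B, (α - b)/(α - t*b)) * PP t B J) *
        (((t*α - α) * ∏ i ∈ J, (t*α - i)) *
          ((∏ j ∈ A \ insert α J, (α - j)) * ∏ b ∈ B, (α - t*b))) +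
      (∏ i ∈ J, (i - t*α)/(i - α)) * W * PP t B J *
        (((α - t*α) * ∏ j ∈ A \ insert α J, (α - t*j)) *
          ((∏ i ∈ J, (α - i)) * ∏ b ∈ B, (α - b)))
      = W * PP t B J *
          (((∏ j ∈ A \ insert α J, (α - t*j)/(α - j)) * ∏ j ∈ A \ insert α J, (α - j)) *
            ((∏ b ∈ B, (α - b)/(α - t*b)) * ∏ b ∈ B, (α - t*b)) *
            ((t*α - α) * ∏ i ∈ J, (t*α - i))) +
        W * PP t B J *
          (((∏ i ∈ J, (i - t*α)/(i - α)) * ∏ i ∈ J, (α - i)) *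
            ((α - t*α) * (∏ j ∈ A \ insert α J, (α - t*j)) * ∏ b ∈ B, (α - b))) := by
        ring
    _ = 0 := by rw [key0, key1, key2]; ring

lemma LHS_eval_a {t α : ℂ} {A B : Finset ℂ} (hα : α ∈ A)
    (hd : ∀ a ∈ A, ∀ b ∈ B, a ≠ t * b) (k : ℕ) :
    (Pout t A B (k+1)).eval α + (Pin t A B k).eval α = 0 := by
  have hαe : α ∉ A.erase α := notMem_erase α A
  have hdisj : Disjoint ((A.erase α).powersetCard (k+1))
      (((A.erase α).powersetCard k).image (insert α)) := by
    rw [Finset.disjoint_left]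
    intro I hI hI'
    obtain ⟨J, _, rfl⟩ := mem_image.1 hI'
    exact hαe ((mem_powersetCard.1 hI).1 (mem_insert_self α J))
  have hinj : ∀ I ∈ (A.erase α).powersetCard k, ∀ J ∈ (A.erase α).powersetCard k,
      insert α I = insert α J → I = J := by
    intro I hI J hJ h
    have hxI : α ∉ I := fun h' => hαe ((mem_powersetCard.1 hI).1 h')
    have hxJ : α ∉ J := fun h' => hαe ((mem_powersetCard.1 hJ).1 h')
    rw [← Finset.erase_insert hxI, ← Finset.erase_insert hxJ, h]
  have hout : (Pout t A B (k+1)).eval α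
      = ∑ J ∈ (A.erase α).powersetCard k,
          cc t A (insert α J) * PP t B (insert α J) *
            ((∏ i ∈ insert α J, (t*α - i)) *
              ((∏ j ∈ A \ insert α J, (α - j)) * ∏ b ∈ B, (α - t*b))) := by
    rw [Pout, eval_finset_sum]
    have hA : A.powersetCard (k+1) =
        (A.erase α).powersetCard (k+1) ∪ ((A.erase α).powersetCard k).image (insert α) := by
      conv_lhs => rw [← insert_erase hα]
      exact powersetCard_succ_insert hαe k
    rw [hA, sum_union hdisj, Finset.sum_image hinj]
    have h1 : ∑ I ∈ (A.erase α).powersetCard (k+1),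
        eval α (C (cc t A I * PP t B I) *
          ((∏ i ∈ I, (C t * X - C i)) * ((∏ j ∈ A \ I, (X - C j)) * ∏ b ∈ B, (X - C (t*b))))) = 0 := by
      refine sum_eq_zero fun I hI => ?_
      have hαAI : α ∈ A \ I := mem_sdiff.2 ⟨hα, fun h => hαe ((mem_powersetCard.1 hI).1 h)⟩
      have : (∏ j ∈ A \ I, (X - C j) : ℂ[X]).eval α = 0 := by
        rw [eval_prod]; exact prod_eq_zero hαAI (by simp)
      simp [this]
    rw [h1, zero_add]
    exact sum_congr rfl fun J hJ => by simp [eval_prod]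
  have hin : (Pin t A B k).eval α
      = ∑ J ∈ (A.erase α).powersetCard k,
          cc t A J * PP t B J *
            ((∏ j ∈ A \ J, (α - t*j)) * ((∏ i ∈ J, (α - i)) * ∏ b ∈ B, (α - b))) := by
    rw [Pin, eval_finset_sum,
      ← Finset.sum_subset (powersetCard_mono (erase_subset α A) (n := k))]
    · exact sum_congr rfl fun J hJ => by simp [eval_prod]
    · intro I hI hnI
      obtain ⟨hIA, hIc⟩ := mem_powersetCard.1 hI
      have hαI : α ∈ I := by
        by_contra hαI
        exact hnI (mem_powersetCard.2
          ⟨fun y hy => mem_erase.2 ⟨fun h => hαI (h ▸ hy), hIA hy⟩, hIc⟩)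
      have : (∏ i ∈ I, (X - C i) : ℂ[X]).eval α = 0 := by
        rw [eval_prod]; exact prod_eq_zero hαI (by simp)
      simp [this]
  rw [hout, hin, ← sum_add_distrib]
  exact sum_eq_zero fun J hJ => pair_scalar hα (mem_powersetCard.1 hJ).1 hd

end Bifund

namespace Bifund

lemma nd_prod_le (s : Finset ℂ) (f : ℂ → ℂ[X]) (h : ∀ i ∈ s, (f i).natDegree ≤ 1) :
    (∏ i ∈ s, f i).natDegree ≤ s.card := by
  refine (natDegree_prod_le _ _).trans ?_
  calc ∑ i ∈ s, (f i).natDegree ≤ ∑ i ∈ s, 1 := Finset.sum_le_sum h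
    _ = s.card := by simp

lemma nd_CtX (t i : ℂ) : (C t * X - C i : ℂ[X]).natDegree ≤ 1 :=
  (natDegree_sub_le _ _).trans
    (max_le ((natDegree_C_mul_le _ _).trans natDegree_X_le) (by simp))

lemma monic_lin (s : Finset ℂ) (g : ℂ → ℂ) : (∏ i ∈ s, (X - C (g i)) : ℂ[X]).Monic :=
  monic_prod_of_monic _ _ fun _ _ => monic_X_sub_C _

lemma nd_lin (s : Finset ℂ) (g : ℂ → ℂ) :
    (∏ i ∈ s, (X - C (g i)) : ℂ[X]).natDegree = s.card := by
  rw [natDegree_prod_of_monic _ _ fun _ _ => monic_X_sub_C _]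
  simp

lemma coeff_term {d : ℕ} (cst : ℂ) (M : ℂ[X]) (hM : M.Monic) (hd : M.natDegree = d) :
    (C cst * M).coeff d = cst := by
  rw [coeff_C_mul, ← hd, hM.coeff_natDegree, mul_one]

lemma Pout_natDegree_le (t : ℂ) (A B : Finset ℂ) (k : ℕ) :
    (Pout t A B k).natDegree ≤ A.card + B.card := by
  refine natDegree_sum_le_of_forall_le _ _ fun I hI => ?_
  obtain ⟨hIA, hIc⟩ := mem_powersetCard.1 hI
  have hcard : I.card ≤ A.card := card_le_card hIA
  refine natDegree_mul_le.trans ?_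
  have h1 : (∏ i ∈ I, (C t * X - C i) : ℂ[X]).natDegree ≤ I.card :=
    nd_prod_le _ _ fun i _ => nd_CtX t i
  have h2 : ((∏ j ∈ A \ I, (X - C j)) * ∏ b ∈ B, (X - C (t*b)) : ℂ[X]).natDegree
      ≤ (A.card - I.card) + B.card := by
    refine natDegree_mul_le.trans ?_
    rw [nd_lin _ (fun i => i), nd_lin B (t * ·), card_sdiff_of_subset hIA]
  calc (C (cc t A I * PP t B I)).natDegree +
        ((∏ i ∈ I, (C t * X - C i)) * ((∏ j ∈ A \ I, (X - C j)) * ∏ b ∈ B, (X - C (t*b))) : ℂ[X]).natDegree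
      ≤ 0 + (I.card + ((A.card - I.card) + B.card)) := by
        refine add_le_add (natDegree_C _).le (natDegree_mul_le.trans (add_le_add h1 h2))
    _ ≤ A.card + B.card := by omega

lemma Pin_natDegree_le (t : ℂ) (A B : Finset ℂ) (k : ℕ) :
    (Pin t A B k).natDegree ≤ A.card + B.card := by
  refine natDegree_sum_le_of_forall_le _ _ fun I hI => ?_
  obtain ⟨hIA, hIc⟩ := mem_powersetCard.1 hI
  have hcard : I.card ≤ A.card := card_le_card hIA
  refine natDegree_mul_le.trans ?_
  have h2 : ((∏ i ∈ I, (X - C i)) * ∏ b ∈ B, (X - C b) : ℂ[X]).natDegree ≤ I.card + B.card := by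
    refine natDegree_mul_le.trans ?_
    rw [nd_lin _ (fun i => i), nd_lin B (fun i => i)]
  calc (C (cc t A I * PP t B I)).natDegree +
        ((∏ j ∈ A \ I, (X - C (t*j))) * ((∏ i ∈ I, (X - C i)) * ∏ b ∈ B, (X - C b)) : ℂ[X]).natDegree
      ≤ 0 + ((A.card - I.card) + (I.card + B.card)) := by
        refine add_le_add (natDegree_C _).le (natDegree_mul_le.trans (add_le_add ?_ h2))
        rw [← card_sdiff_of_subset hIA]
        exact (nd_lin _ (t * ·)).le
    _ ≤ A.card + B.card := by omega

lemma PSb_natDegree_le (t : ℂ) (A B : Finset ℂ) (k : ℕ) :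
    (PSb t A B k).natDegree ≤ A.card + B.card := by
  refine natDegree_sum_le_of_forall_le _ _ fun I hI => ?_
  obtain ⟨hIB, hIc⟩ := mem_powersetCard.1 hI
  have hcard : I.card ≤ B.card := card_le_card hIB
  refine natDegree_mul_le.trans ?_
  have h2 : ((∏ b ∈ B \ I, (X - C (t*b))) * ∏ j ∈ A, (X - C j) : ℂ[X]).natDegree
      ≤ (B.card - I.card) + A.card := by
    refine natDegree_mul_le.trans ?_
    rw [nd_lin _ (t * ·), nd_lin A (fun i => i), card_sdiff_of_subset hIB]
  calc (C (cb t B I * Pb t A I)).natDegree +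
        ((∏ i ∈ I, (X - C i)) * ((∏ b ∈ B \ I, (X - C (t*b))) * ∏ j ∈ A, (X - C j)) : ℂ[X]).natDegree
      ≤ 0 + (I.card + ((B.card - I.card) + A.card)) := by
        refine add_le_add (natDegree_C _).le (natDegree_mul_le.trans (add_le_add ?_ h2))
        exact (nd_lin _ (fun i => i)).le
    _ ≤ A.card + B.card := by omega

lemma Pout_coeff {t : ℂ} (ht : t ≠ 0) (A B : Finset ℂ) (k : ℕ) :
    (Pout t A B k).coeff (A.card + B.card) = t^k * S t A B k := by
  rw [Pout, finset_sum_coeff, S, Finset.mul_sum]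
  refine sum_congr rfl fun I hI => ?_
  obtain ⟨hIA, hIc⟩ := mem_powersetCard.1 hI
  have hcard : I.card ≤ A.card := card_le_card hIA
  have hrw : (∏ i ∈ I, (C t * X - C i) : ℂ[X]) = C (t^I.card) * ∏ i ∈ I, (X - C (t⁻¹ * i)) := by
    have : ∀ i ∈ I, (C t * X - C i : ℂ[X]) = C t * (X - C (t⁻¹ * i)) := by
      intro i _
      rw [mul_sub, ← C_mul, mul_inv_cancel_left₀ ht]
    rw [prod_congr rfl this, prod_mul_distrib, prod_const, ← C_pow]
  rw [hrw]
  have hre : C (cc t A I * PP t B I) *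
      ((C (t^I.card) * ∏ i ∈ I, (X - C (t⁻¹ * i))) *
        ((∏ j ∈ A \ I, (X - C j)) * ∏ b ∈ B, (X - C (t*b)))) =
      C (t^I.card * (cc t A I * PP t B I)) *
      ((∏ i ∈ I, (X - C (t⁻¹ * i))) *
        ((∏ j ∈ A \ I, (X - C j)) * ∏ b ∈ B, (X - C (t*b)))) := by
    simp only [C_mul]; ring
  rw [hre]
  have hM : ((∏ i ∈ I, (X - C (t⁻¹ * i))) *
      ((∏ j ∈ A \ I, (X - C j)) * ∏ b ∈ B, (X - C (t*b))) : ℂ[X]).Monic :=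
    (monic_lin I (t⁻¹ * ·)).mul ((monic_lin (A \ I) (fun i => i)).mul (monic_lin B (t * ·)))
  have hMd : ((∏ i ∈ I, (X - C (t⁻¹ * i))) *
      ((∏ j ∈ A \ I, (X - C j)) * ∏ b ∈ B, (X - C (t*b))) : ℂ[X]).natDegree = A.card + B.card := by
    rw [Monic.natDegree_mul (monic_lin I (t⁻¹ * ·))
        ((monic_lin (A \ I) (fun i => i)).mul (monic_lin B (t * ·))),
      Monic.natDegree_mul (monic_lin (A \ I) (fun i => i)) (monic_lin B (t * ·)),
      nd_lin I (t⁻¹ * ·), nd_lin (A \ I) (fun i => i), nd_lin B (t * ·), card_sdiff_of_subset hIA]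
    omega
  rw [coeff_term _ _ hM hMd, hIc]

lemma Pin_coeff (t : ℂ) (A B : Finset ℂ) (k : ℕ) :
    (Pin t A B k).coeff (A.card + B.card) = S t A B k := by
  rw [Pin, finset_sum_coeff, S]
  refine sum_congr rfl fun I hI => ?_
  obtain ⟨hIA, hIc⟩ := mem_powersetCard.1 hI
  have hcard : I.card ≤ A.card := card_le_card hIA
  have hM : ((∏ j ∈ A \ I, (X - C (t*j))) *
      ((∏ i ∈ I, (X - C i)) * ∏ b ∈ B, (X - C b)) : ℂ[X]).Monic :=
    (monic_lin (A \ I) (t * ·)).mul ((monic_lin I (fun i => i)).mul (monic_lin B (fun i => i)))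
  have hMd : ((∏ j ∈ A \ I, (X - C (t*j))) *
      ((∏ i ∈ I, (X - C i)) * ∏ b ∈ B, (X - C b)) : ℂ[X]).natDegree = A.card + B.card := by
    rw [Monic.natDegree_mul (monic_lin (A \ I) (t * ·))
        ((monic_lin I (fun i => i)).mul (monic_lin B (fun i => i))),
      Monic.natDegree_mul (monic_lin I (fun i => i)) (monic_lin B (fun i => i)),
      nd_lin (A \ I) (t * ·), nd_lin I (fun i => i), nd_lin B (fun i => i), card_sdiff_of_subset hIA]
    omega
  rw [coeff_term _ _ hM hMd]

lemma PSb_coeff (t : ℂ) (A B : Finset ℂ) (k : ℕ) :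
    (PSb t A B k).coeff (A.card + B.card) = Sb t A B k := by
  rw [PSb, finset_sum_coeff, Sb]
  refine sum_congr rfl fun I hI => ?_
  obtain ⟨hIB, hIc⟩ := mem_powersetCard.1 hI
  have hcard : I.card ≤ B.card := card_le_card hIB
  have hM : ((∏ i ∈ I, (X - C i)) *
      ((∏ b ∈ B \ I, (X - C (t*b))) * ∏ j ∈ A, (X - C j)) : ℂ[X]).Monic :=
    (monic_lin I (fun i => i)).mul ((monic_lin (B \ I) (t * ·)).mul (monic_lin A (fun i => i)))
  have hMd : ((∏ i ∈ I, (X - C i)) *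
      ((∏ b ∈ B \ I, (X - C (t*b))) * ∏ j ∈ A, (X - C j)) : ℂ[X]).natDegree = A.card + B.card := by
    rw [Monic.natDegree_mul (monic_lin I (fun i => i))
        ((monic_lin (B \ I) (t * ·)).mul (monic_lin A (fun i => i))),
      Monic.natDegree_mul (monic_lin (B \ I) (t * ·)) (monic_lin A (fun i => i)),
      nd_lin I (fun i => i), nd_lin (B \ I) (t * ·), nd_lin A (fun i => i), card_sdiff_of_subset hIB]
    omega
  rw [coeff_term _ _ hM hMd]

end Bifund

namespace Bifund

lemma poly_eq_helper (p q : ℂ[X]) (s : Finset ℂ) (hp : p.natDegree ≤ s.card)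
    (hq : q.natDegree ≤ s.card) (hc : p.coeff s.card = q.coeff s.card)
    (he : ∀ x ∈ s, p.eval x = q.eval x) : p = q := by
  by_contra hne
  have hpq : p - q ≠ 0 := sub_ne_zero.2 hne
  have hcoeff : (p - q).coeff s.card = 0 := by rw [coeff_sub, hc, sub_self]
  have hd : (p - q).natDegree ≤ s.card := (natDegree_sub_le p q).trans (max_le hp hq)
  have hlt : (p - q).natDegree < s.card := by
    rcases lt_or_eq_of_le hd with h | h
    · exact h
    · exfalso
      have h2 : (p - q).leadingCoeff = 0 := by
        rw [Polynomial.leadingCoeff, h, hcoeff]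
      exact hpq (leadingCoeff_eq_zero.1 h2)
  exact hpq (eq_zero_of_natDegree_lt_card_of_eval_eq_zero' (p - q) s
    (fun x hx => by rw [eval_sub, he x hx, sub_self]) hlt)

lemma poly_eq_of_eval_eq_cofinite (p q : ℂ[X]) (s : Finset ℂ)
    (h : ∀ x : ℂ, x ∉ s → p.eval x = q.eval x) : p = q := by
  apply eq_of_infinite_eval_eq
  exact ((s.finite_toSet).infinite_compl).mono fun x hx => h x hx

lemma S_zero (t : ℂ) (A B : Finset ℂ) : S t A B 0 = 1 := by simp [S, cc, PP]
lemma Sb_zero (t : ℂ) (A B : Finset ℂ) : Sb t A B 0 = 1 := by simp [Sb, cb, Pb]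
lemma S_of_gt (t : ℂ) (A B : Finset ℂ) {r : ℕ} (h : A.card < r) : S t A B r = 0 := by
  simp [S, Finset.powersetCard_eq_empty.2 h]
lemma Sb_of_gt (t : ℂ) (A B : Finset ℂ) {r : ℕ} (h : B.card < r) : Sb t A B r = 0 := by
  simp [Sb, Finset.powersetCard_eq_empty.2 h]

/-- transformation t → t⁻¹ -/
lemma T1 {t : ℂ} (ht : t ≠ 0) (Xs Ys : Finset ℂ) (s : ℕ) :
    Sb t Xs Ys s = t ^ ((s*Ys.card : ℤ) - s*s - s*Xs.card) * S t⁻¹ Ys Xs s := by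
  rw [Sb, S, Finset.mul_sum]
  refine sum_congr rfl fun I hI => ?_
  obtain ⟨hIY, hIc⟩ := mem_powersetCard.1 hI
  have hsY : s ≤ Ys.card := hIc ▸ card_le_card hIY
  have fac1 : ∀ i j : ℂ, (j - t*i)/(j - i) = t * ((i - t⁻¹*j)/(i - j)) := by
    intro i j
    rw [mul_div_assoc', mul_sub, mul_inv_cancel_left₀ ht, ← neg_sub (t*i) j, ← neg_sub i j,
      neg_div_neg_eq]
  have fac2 : ∀ i j : ℂ, (j - i)/(j - t*i) = t⁻¹ * ((i - j)/(i - t⁻¹*j)) := by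
    intro i j
    have h1 : i - t⁻¹*j = t⁻¹ * (t*i - j) := by
      rw [mul_sub, inv_mul_cancel_left₀ ht]
    rw [h1, mul_div_assoc', mul_div_mul_left _ _ (inv_ne_zero ht), ← neg_sub (t*i) j,
      ← neg_sub i j, neg_div_neg_eq]
  have hcb : cb t Ys I = t ^ (s * (Ys.card - s)) * cc t⁻¹ Ys I := by
    unfold cb cc
    calc ∏ i ∈ I, ∏ j ∈ Ys \ I, (j - t*i)/(j - i)
        = ∏ i ∈ I, ∏ j ∈ Ys \ I, (t * ((i - t⁻¹*j)/(i - j))) :=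
          prod_congr rfl fun i _ => prod_congr rfl fun j _ => fac1 i j
      _ = ∏ i ∈ I, (t ^ (Ys \ I).card * ∏ j ∈ Ys \ I, (i - t⁻¹*j)/(i - j)) :=
          prod_congr rfl fun i _ => by rw [prod_mul_distrib, prod_const]
      _ = t ^ (s * (Ys.card - s)) * ∏ i ∈ I, ∏ j ∈ Ys \ I, (i - t⁻¹*j)/(i - j) := by
          rw [prod_mul_distrib, prod_const, ← pow_mul, card_sdiff_of_subset hIY, hIc, mul_comm (Ys.card - s) s]
  have hPb : Pb t Xs I = t⁻¹ ^ (s * Xs.card) * PP t⁻¹ Xs I := by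
    unfold Pb PP
    calc ∏ i ∈ I, ∏ j ∈ Xs, (j - i)/(j - t*i)
        = ∏ i ∈ I, ∏ j ∈ Xs, (t⁻¹ * ((i - j)/(i - t⁻¹*j))) :=
          prod_congr rfl fun i _ => prod_congr rfl fun j _ => fac2 i j
      _ = ∏ i ∈ I, (t⁻¹ ^ Xs.card * ∏ j ∈ Xs, (i - j)/(i - t⁻¹*j)) :=
          prod_congr rfl fun i _ => by rw [prod_mul_distrib, prod_const]
      _ = t⁻¹ ^ (s * Xs.card) * ∏ i ∈ I, ∏ j ∈ Xs, (i - j)/(i - t⁻¹*j) := by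
          rw [prod_mul_distrib, prod_const, ← pow_mul, hIc, mul_comm Xs.card s]
  rw [hcb, hPb]
  have hz : (t ^ (s * (Ys.card - s)) : ℂ) * t⁻¹ ^ (s * Xs.card)
      = t ^ ((s*Ys.card : ℤ) - s*s - s*Xs.card) := by
    rw [inv_pow, ← zpow_natCast t (s * (Ys.card - s)), ← zpow_natCast t (s * Xs.card),
      ← zpow_neg, ← zpow_add₀ ht]
    congr 1
    rw [Nat.cast_mul, Nat.cast_mul, Nat.cast_sub hsY]
    ring
  calc t ^ (s * (Ys.card - s)) * cc t⁻¹ Ys I * (t⁻¹ ^ (s * Xs.card) * PP t⁻¹ Xs I)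
      = (t ^ (s * (Ys.card - s)) * t⁻¹ ^ (s * Xs.card)) * (cc t⁻¹ Ys I * PP t⁻¹ Xs I) := by
        ring
    _ = _ := by rw [hz]

lemma corect {t : ℂ} (ht : t ≠ 0) {A B : Finset ℂ} (hc : A.card + 1 = B.card)
    (hrect : ∀ r : ℕ, S t⁻¹ B A (r+1) = t⁻¹^(r+1) * Sb t⁻¹ B A (r+1) + Sb t⁻¹ B A r)
    (r : ℕ) : Sb t A B (r+1) = t^(r+1) * S t A B (r+1) + S t A B r := by
  have hti : t⁻¹ ≠ 0 := inv_ne_zero ht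
  have e1 := T1 ht A B (r+1)
  have e2 := T1 hti B A (r+1)
  have e3 := T1 hti B A r
  rw [inv_inv] at e2 e3
  rw [e1, hrect r, e2, e3]
  have hBc : (B.card : ℤ) = (A.card : ℤ) + 1 := by exact_mod_cast hc.symm
  have k1 : (t:ℂ) ^ (((r+1)*B.card : ℤ) - (r+1)*(r+1) - (r+1)*A.card) *
      (t⁻¹^(r+1) * t⁻¹ ^ (((r+1)*A.card : ℤ) - (r+1)*(r+1) - (r+1)*B.card)) = t^(r+1) := by
    rw [inv_zpow, ← zpow_neg, inv_pow, ← zpow_natCast t (r+1), ← zpow_neg,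
      ← zpow_add₀ ht, ← zpow_add₀ ht]
    rw [show ((r+1)*B.card - (r+1)*(r+1) - (r+1)*A.card +
        (-(((r:ℕ)+1:ℕ):ℤ) + -((r+1)*A.card - (r+1)*(r+1) - (r+1)*B.card)) : ℤ)
        = ((r:ℕ)+1:ℕ) from by push_cast [hBc]; ring]
  have k2 : (t:ℂ) ^ (((r+1)*B.card : ℤ) - (r+1)*(r+1) - (r+1)*A.card) *
      t⁻¹ ^ ((r*A.card : ℤ) - r*r - r*B.card) = 1 := by
    rw [inv_zpow, ← zpow_neg, ← zpow_add₀ ht]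
    rw [show (((r+1)*B.card : ℤ) - (r+1)*(r+1) - (r+1)*A.card +
        -((r*A.card : ℤ) - r*r - r*B.card)) = 0 from by rw [hBc]; ring]
    exact zpow_zero t
  calc t ^ (((r+1)*B.card : ℤ) - (r+1)*(r+1) - (r+1)*A.card) *
        (t⁻¹^(r+1) * (t⁻¹ ^ (((r+1)*A.card : ℤ) - (r+1)*(r+1) - (r+1)*B.card) * S t A B (r+1)) +
          t⁻¹ ^ ((r*A.card : ℤ) - r*r - r*B.card) * S t A B r)
      = (t ^ (((r+1)*B.card : ℤ) - (r+1)*(r+1) - (r+1)*A.card) *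
          (t⁻¹^(r+1) * t⁻¹ ^ (((r+1)*A.card : ℤ) - (r+1)*(r+1) - (r+1)*B.card))) * S t A B (r+1) +
        (t ^ (((r+1)*B.card : ℤ) - (r+1)*(r+1) - (r+1)*A.card) *
          t⁻¹ ^ ((r*A.card : ℤ) - r*r - r*B.card)) * S t A B r := by ring
    _ = t^(r+1) * S t A B (r+1) + S t A B r := by rw [k1, k2, one_mul]

end Bifund

namespace Bifund

def RectStmt (m : ℕ) : Prop := ∀ t : ℂ, t ≠ 0 → ∀ A B : Finset ℂ,
  (∀ a ∈ A, ∀ b ∈ B, a ≠ t*b) → B.card = m → A.card = m + 1 →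
  ∀ r : ℕ, S t A B (r+1) = t^(r+1) * Sb t A B (r+1) + Sb t A B r

def SquareStmt (m : ℕ) : Prop := ∀ t : ℂ, t ≠ 0 → ∀ A B : Finset ℂ,
  (∀ a ∈ A, ∀ b ∈ B, a ≠ t*b) → B.card = m → A.card = m →
  ∀ r : ℕ, S t A B r = Sb t A B r

lemma Q_eval_ne_zero {t α : ℂ} {A B : Finset ℂ} (hα : α ∉ A) (hαB : ∀ b ∈ B, α ≠ t*b) :
    (Q t A B).eval α ≠ 0 := by
  rw [eval_Q]
  refine mul_ne_zero (prod_ne_zero_iff.2 fun j hj => sub_ne_zero.2 fun h => hα ?_)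
    (prod_ne_zero_iff.2 fun b hb => sub_ne_zero.2 (hαB b hb))
  rw [h]; exact hj

lemma rect_of_polyeq {t α : ℂ} {A B : Finset ℂ} (hα : α ∉ A) (hαB : ∀ b ∈ B, α ≠ t*b) (r : ℕ)
    (hpoly : Pout t A B (r+1) + Pin t A B r = C (t^(r+1)) * PSb t A B (r+1) + PSb t A B r) :
    S t (insert α A) B (r+1)
      = t^(r+1) * Sb t (insert α A) B (r+1) + Sb t (insert α A) B r := by
  apply mul_right_cancel₀ (Q_eval_ne_zero hα hαB)
  rw [S_rep t α A B hα hαB r, hpoly, eval_add, eval_mul, eval_C, add_mul, mul_assoc,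
    Sb_rep t α A B hα hαB (r+1), Sb_rep t α A B hα hαB r]

lemma square_of_polyeq {t α : ℂ} {A B : Finset ℂ} (hα : α ∉ A) (hαB : ∀ b ∈ B, α ≠ t*b) (r : ℕ)
    (hpoly : Pout t A B (r+1) + Pin t A B r = PSb t A B (r+1)) :
    S t (insert α A) B (r+1) = Sb t (insert α A) B (r+1) := by
  apply mul_right_cancel₀ (Q_eval_ne_zero hα hαB)
  rw [S_rep t α A B hα hαB r, hpoly, Sb_rep t α A B hα hαB (r+1)]

lemma rect_core {m : ℕ} (sq : SquareStmt m) (ihrect : ∀ m' : ℕ, m' < m → RectStmt m')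
    {t : ℂ} (ht : t ≠ 0) {A B : Finset ℂ} (hd : ∀ a ∈ A, ∀ b ∈ B, a ≠ t*b)
    (hB : B.card = m) (hA : A.card = m + 1) (hAB : A ∩ B = ∅) (r : ℕ) :
    S t A B (r+1) = t^(r+1) * Sb t A B (r+1) + Sb t A B r := by
  obtain ⟨α, hαA⟩ : A.Nonempty := card_pos.1 (by omega)
  have hαA' : α ∉ A.erase α := notMem_erase α A
  have hA'c : (A.erase α).card = m := by rw [card_erase_of_mem hαA, hA]; omega
  have hd' : ∀ a ∈ A.erase α, ∀ b ∈ B, a ≠ t*b := fun a haa => hd a (erase_subset α A haa)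
  have hdisj : Disjoint (A.erase α) B := by
    rw [Finset.disjoint_left]
    intro x hx1 hx2
    have hmem : x ∈ A ∩ B := mem_inter.2 ⟨erase_subset α A hx1, hx2⟩
    simp [hAB] at hmem
  have hcard : (A.erase α ∪ B).card = (A.erase α).card + B.card := card_union_of_disjoint hdisj
  have hpoly : Pout t (A.erase α) B (r+1) + Pin t (A.erase α) B r
      = C (t^(r+1)) * PSb t (A.erase α) B (r+1) + PSb t (A.erase α) B r := by
    apply poly_eq_helper _ _ (A.erase α ∪ B)
    · rw [hcard]
      exact (natDegree_add_le _ _).trans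
        (max_le (Pout_natDegree_le t _ B (r+1)) (Pin_natDegree_le t _ B r))
    · rw [hcard]
      exact (natDegree_add_le _ _).trans
        (max_le ((natDegree_C_mul_le _ _).trans (PSb_natDegree_le t _ B (r+1)))
          (PSb_natDegree_le t _ B r))
    · rw [hcard, coeff_add, coeff_add, Pout_coeff ht, Pin_coeff, coeff_C_mul,
        PSb_coeff, PSb_coeff,
        sq t ht (A.erase α) B hd' hB hA'c (r+1), sq t ht (A.erase α) B hd' hB hA'c r]
    · intro x hx
      rcases mem_union.1 hx with hx | hx
      · rw [eval_add, LHS_eval_a hx hd' r, eval_add, eval_mul, eval_C,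
          PSb_eval_a hx (r+1), PSb_eval_a hx r]
        ring
      · have hm : 0 < m := by rw [← hB]; exact card_pos.2 ⟨x, hx⟩
        have hBx : (B.erase x).card = m - 1 := by rw [card_erase_of_mem hx, hB]
        have hd'' : ∀ a ∈ A.erase α, ∀ b ∈ B.erase x, a ≠ t*b :=
          fun a ha b hb => hd' a ha b (erase_subset x B hb)
        have hrec := ihrect (m-1) (by omega) t ht (A.erase α) (B.erase x) hd'' hBx (by omega) r
        rw [eval_add, eval_add, eval_mul, eval_C, Pout_eval_b hx hd' (r+1), Pin_eval_b hx r,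
          PSb_eval_b hx (r+1), PSb_eval_b hx r, add_zero, hrec]
        ring
  have hfin := rect_of_polyeq hαA' (fun b hb => hd α hαA b hb) r hpoly
  rwa [insert_erase hαA] at hfin

lemma square_core {m : ℕ} (ihsq : ∀ m' : ℕ, m' < m → SquareStmt m')
    (ihrect : ∀ m' : ℕ, m' < m → RectStmt m')
    {t : ℂ} (ht : t ≠ 0) {A B : Finset ℂ} (hd : ∀ a ∈ A, ∀ b ∈ B, a ≠ t*b)
    (hB : B.card = m) (hA : A.card = m) (hAB : A ∩ B = ∅) (r : ℕ) (hm : 0 < m) :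
    S t A B (r+1) = Sb t A B (r+1) := by
  obtain ⟨α, hαA⟩ : A.Nonempty := card_pos.1 (by omega)
  have hαA' : α ∉ A.erase α := notMem_erase α A
  have hA'c : (A.erase α).card = m - 1 := by rw [card_erase_of_mem hαA, hA]
  have hd' : ∀ a ∈ A.erase α, ∀ b ∈ B, a ≠ t*b := fun a haa => hd a (erase_subset α A haa)
  have hdisj : Disjoint (A.erase α) B := by
    rw [Finset.disjoint_left]
    intro x hx1 hx2
    have hmem : x ∈ A ∩ B := mem_inter.2 ⟨erase_subset α A hx1, hx2⟩
    simp [hAB] at hmem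
  have hcard : (A.erase α ∪ B).card = (A.erase α).card + B.card := card_union_of_disjoint hdisj
  have hdBA : ∀ x ∈ B, ∀ y ∈ A.erase α, x ≠ t⁻¹*y := by
    intro x hx y hy h
    have htx : t * x = y := by rw [h, mul_inv_cancel_left₀ ht]
    exact hd' y hy x hx htx.symm
  have hrectBA : ∀ r' : ℕ, S t⁻¹ B (A.erase α) (r'+1)
      = t⁻¹^(r'+1) * Sb t⁻¹ B (A.erase α) (r'+1) + Sb t⁻¹ B (A.erase α) r' :=
    ihrect (m-1) (by omega) t⁻¹ (inv_ne_zero ht) B (A.erase α) hdBA hA'c (by omega)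
  have hco := corect ht (A := A.erase α) (B := B) (by omega) hrectBA r
  have hpoly : Pout t (A.erase α) B (r+1) + Pin t (A.erase α) B r
      = PSb t (A.erase α) B (r+1) := by
    apply poly_eq_helper _ _ (A.erase α ∪ B)
    · rw [hcard]
      exact (natDegree_add_le _ _).trans
        (max_le (Pout_natDegree_le t _ B (r+1)) (Pin_natDegree_le t _ B r))
    · rw [hcard]; exact PSb_natDegree_le t _ B (r+1)
    · rw [hcard, coeff_add, Pout_coeff ht, Pin_coeff, PSb_coeff, hco]
    · intro x hx
      rcases mem_union.1 hx with hx | hx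
      · rw [eval_add, LHS_eval_a hx hd' r, PSb_eval_a hx (r+1)]
      · have hm' : 0 < m - 1 ∨ True := Or.inr trivial
        have hBx : (B.erase x).card = m - 1 := by rw [card_erase_of_mem hx, hB]
        have hd'' : ∀ a ∈ A.erase α, ∀ b ∈ B.erase x, a ≠ t*b :=
          fun a ha b hb => hd' a ha b (erase_subset x B hb)
        have hrec := ihsq (m-1) (by omega) t ht (A.erase α) (B.erase x) hd'' hBx hA'c (r+1)
        rw [eval_add, Pout_eval_b hx hd' (r+1), Pin_eval_b hx r, PSb_eval_b hx (r+1),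
          add_zero, hrec]
  have hfin := square_of_polyeq hαA' (fun b hb => hd α hαA b hb) r hpoly
  rwa [insert_erase hαA] at hfin

end Bifund

namespace Bifund

lemma rect_step {m : ℕ} (sq : SquareStmt m) (ihrect : ∀ m' : ℕ, m' < m → RectStmt m') :
    RectStmt m := by
  intro t ht A₀ B hd₀ hB hA₀ r
  suffices h : ∀ (n : ℕ) (A : Finset ℂ), (A ∩ B).card ≤ n → (∀ a ∈ A, ∀ b ∈ B, a ≠ t*b) →
      A.card = m + 1 → S t A B (r+1) = t^(r+1) * Sb t A B (r+1) + Sb t A B r by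
    exact h (A₀ ∩ B).card A₀ le_rfl hd₀ hA₀
  intro n
  induction n with
  | zero =>
    intro A hn hd hA
    exact rect_core sq ihrect ht hd hB hA (card_eq_zero.1 (Nat.le_zero.1 hn)) r
  | succ n ih =>
    intro A hn hd hA
    by_cases hAB : (A ∩ B).card = 0
    · exact rect_core sq ihrect ht hd hB hA (card_eq_zero.1 hAB) r
    · obtain ⟨a, ha⟩ := card_pos.1 (Nat.pos_of_ne_zero hAB)
      have haA : a ∈ A := (mem_inter.1 ha).1
      have haB : a ∈ B := (mem_inter.1 ha).2
      have haA' : a ∉ A.erase a := notMem_erase a A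
      have hpoly : Pout t (A.erase a) B (r+1) + Pin t (A.erase a) B r
          = C (t^(r+1)) * PSb t (A.erase a) B (r+1) + PSb t (A.erase a) B r := by
        apply poly_eq_of_eval_eq_cofinite _ _ (A.erase a ∪ (B ∪ B.image (t * ·)))
        intro x hx
        have hxA' : x ∉ A.erase a := fun h => hx (mem_union_left _ h)
        have hxB : x ∉ B := fun h => hx (mem_union_right _ (mem_union_left _ h))
        have hxtB : ∀ b ∈ B, x ≠ t*b := fun b hb h =>
          hx (mem_union_right _ (mem_union_right _ (mem_image.2 ⟨b, hb, h.symm⟩)))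
        have hins : (insert x (A.erase a)).card = m + 1 := by
          rw [card_insert_of_notMem hxA', card_erase_of_mem haA, hA]
          omega
        have hintc : ((insert x (A.erase a)) ∩ B).card ≤ n := by
          have hsub : (insert x (A.erase a)) ∩ B ⊆ (A ∩ B).erase a := by
            intro y hy
            obtain ⟨hy1, hy2⟩ := mem_inter.1 hy
            rcases mem_insert.1 hy1 with rfl | hy1
            · exact absurd hy2 hxB
            · exact mem_erase.2 ⟨(mem_erase.1 hy1).1,
                mem_inter.2 ⟨(mem_erase.1 hy1).2, hy2⟩⟩
          calc ((insert x (A.erase a)) ∩ B).card ≤ ((A ∩ B).erase a).card := card_le_card hsub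
            _ ≤ n := by rw [card_erase_of_mem ha]; omega
        have hdins : ∀ y ∈ insert x (A.erase a), ∀ b ∈ B, y ≠ t*b := by
          intro y hy b hb
          rcases mem_insert.1 hy with rfl | hy
          · exact hxtB b hb
          · exact hd y (erase_subset a A hy) b hb
        have hid := ih (insert x (A.erase a)) hintc hdins hins
        calc eval x (Pout t (A.erase a) B (r+1) + Pin t (A.erase a) B r)
            = S t (insert x (A.erase a)) B (r+1) * (Q t (A.erase a) B).eval x :=
              (S_rep t x (A.erase a) B hxA' hxtB r).symm
          _ = (t^(r+1) * Sb t (insert x (A.erase a)) B (r+1)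
                + Sb t (insert x (A.erase a)) B r) * (Q t (A.erase a) B).eval x := by
              rw [hid]
          _ = eval x (C (t^(r+1)) * PSb t (A.erase a) B (r+1) + PSb t (A.erase a) B r) := by
              rw [eval_add, eval_mul, eval_C, add_mul, mul_assoc,
                Sb_rep t x (A.erase a) B hxA' hxtB (r+1), Sb_rep t x (A.erase a) B hxA' hxtB r]
      have hfin := rect_of_polyeq haA' (fun b hb => hd a haA b hb) r hpoly
      rwa [insert_erase haA] at hfin

lemma square_step {m : ℕ} (ihsq : ∀ m' : ℕ, m' < m → SquareStmt m')
    (ihrect : ∀ m' : ℕ, m' < m → RectStmt m') : SquareStmt m := by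
  intro t ht A₀ B hd₀ hB hA₀ r
  cases r with
  | zero => rw [S_zero, Sb_zero]
  | succ r =>
    rcases Nat.eq_zero_or_pos m with hm | hm
    · rw [S_of_gt t A₀ B (by omega), Sb_of_gt t A₀ B (by omega)]
    · suffices h : ∀ (n : ℕ) (A : Finset ℂ), (A ∩ B).card ≤ n → (∀ a ∈ A, ∀ b ∈ B, a ≠ t*b) →
          A.card = m → S t A B (r+1) = Sb t A B (r+1) by
        exact h (A₀ ∩ B).card A₀ le_rfl hd₀ hA₀
      intro n
      induction n with
      | zero =>
        intro A hn hd hA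
        exact square_core ihsq ihrect ht hd hB hA (card_eq_zero.1 (Nat.le_zero.1 hn)) r hm
      | succ n ih =>
        intro A hn hd hA
        by_cases hAB : (A ∩ B).card = 0
        · exact square_core ihsq ihrect ht hd hB hA (card_eq_zero.1 hAB) r hm
        · obtain ⟨a, ha⟩ := card_pos.1 (Nat.pos_of_ne_zero hAB)
          have haA : a ∈ A := (mem_inter.1 ha).1
          have haB : a ∈ B := (mem_inter.1 ha).2
          have haA' : a ∉ A.erase a := notMem_erase a A
          have hpoly : Pout t (A.erase a) B (r+1) + Pin t (A.erase a) B r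
              = PSb t (A.erase a) B (r+1) := by
            apply poly_eq_of_eval_eq_cofinite _ _ (A.erase a ∪ (B ∪ B.image (t * ·)))
            intro x hx
            have hxA' : x ∉ A.erase a := fun h => hx (mem_union_left _ h)
            have hxB : x ∉ B := fun h => hx (mem_union_right _ (mem_union_left _ h))
            have hxtB : ∀ b ∈ B, x ≠ t*b := fun b hb h =>
              hx (mem_union_right _ (mem_union_right _ (mem_image.2 ⟨b, hb, h.symm⟩)))
            have hins : (insert x (A.erase a)).card = m := by
              rw [card_insert_of_notMem hxA', card_erase_of_mem haA, hA]
              omega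
            have hintc : ((insert x (A.erase a)) ∩ B).card ≤ n := by
              have hsub : (insert x (A.erase a)) ∩ B ⊆ (A ∩ B).erase a := by
                intro y hy
                obtain ⟨hy1, hy2⟩ := mem_inter.1 hy
                rcases mem_insert.1 hy1 with rfl | hy1
                · exact absurd hy2 hxB
                · exact mem_erase.2 ⟨(mem_erase.1 hy1).1,
                    mem_inter.2 ⟨(mem_erase.1 hy1).2, hy2⟩⟩
              calc ((insert x (A.erase a)) ∩ B).card ≤ ((A ∩ B).erase a).card :=
                    card_le_card hsub
                _ ≤ n := by rw [card_erase_of_mem ha]; omega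
            have hdins : ∀ y ∈ insert x (A.erase a), ∀ b ∈ B, y ≠ t*b := by
              intro y hy b hb
              rcases mem_insert.1 hy with rfl | hy
              · exact hxtB b hb
              · exact hd y (erase_subset a A hy) b hb
            have hid := ih (insert x (A.erase a)) hintc hdins hins
            calc eval x (Pout t (A.erase a) B (r+1) + Pin t (A.erase a) B r)
                = S t (insert x (A.erase a)) B (r+1) * (Q t (A.erase a) B).eval x :=
                  (S_rep t x (A.erase a) B hxA' hxtB r).symm
              _ = Sb t (insert x (A.erase a)) B (r+1) * (Q t (A.erase a) B).eval x := by
                  rw [hid]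
              _ = eval x (PSb t (A.erase a) B (r+1)) :=
                  Sb_rep t x (A.erase a) B hxA' hxtB (r+1)
          have hfin := square_of_polyeq haA' (fun b hb => hd a haA b hb) r hpoly
          rwa [insert_erase haA] at hfin

theorem all_stmts : ∀ m : ℕ, SquareStmt m ∧ RectStmt m := by
  intro m
  induction m using Nat.strong_induction_on with
  | _ m ih =>
    have hsq : SquareStmt m := square_step (fun m' h => (ih m' h).1) (fun m' h => (ih m' h).2)
    exact ⟨hsq, rect_step hsq (fun m' h => (ih m' h).2)⟩

end Bifund

namespace Bifund

lemma prod_prod_image {ι κ : Type*} [DecidableEq ι] [DecidableEq κ]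
    (f1 : ι → ℂ) (f2 : κ → ℂ) (h1 : Function.Injective f1) (h2 : Function.Injective f2)
    (s : Finset ι) (u : Finset κ) (g : ℂ → ℂ → ℂ) :
    ∏ x ∈ s.image f1, ∏ y ∈ u.image f2, g x y = ∏ i ∈ s, ∏ j ∈ u, g (f1 i) (f2 j) := by
  rw [Finset.prod_image (fun x _ y _ h => h1 h)]
  exact prod_congr rfl fun i _ => Finset.prod_image (fun x _ y _ h => h2 h)

lemma prod_prod_scale {ι κ : Type*} (I : Finset ι) (Js : Finset κ) (c : ℂ) (f g : ι → κ → ℂ)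
    (h : ∀ i ∈ I, ∀ j ∈ Js, f i j = c * g i j) :
    ∏ i ∈ I, ∏ j ∈ Js, f i j = c ^ (I.card * Js.card) * ∏ i ∈ I, ∏ j ∈ Js, g i j := by
  calc ∏ i ∈ I, ∏ j ∈ Js, f i j
      = ∏ i ∈ I, (c ^ Js.card * ∏ j ∈ Js, g i j) := by
        refine prod_congr rfl fun i hi => ?_
        rw [prod_congr rfl (h i hi), prod_mul_distrib, prod_const]
    _ = c ^ (I.card * Js.card) * ∏ i ∈ I, ∏ j ∈ Js, g i j := by
        rw [prod_mul_distrib, prod_const, ← pow_mul, mul_comm Js.card I.card]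

lemma sum_powersetCard_image {ι : Type*} [DecidableEq ι] (s : Finset ι) (f : ι → ℂ)
    (hf : Function.Injective f) (r : ℕ) (F : Finset ℂ → ℂ) :
    ∑ I ∈ (s.image f).powersetCard r, F I = ∑ J ∈ s.powersetCard r, F (J.image f) := by
  refine (Finset.sum_bij' (i := fun J _ => J.image f)
    (j := fun I _ => s.filter (fun x => f x ∈ I)) ?_ ?_ ?_ ?_ ?_).symm
  · intro J hJ
    obtain ⟨hJs, hJc⟩ := mem_powersetCard.1 hJ
    exact mem_powersetCard.2 ⟨image_subset_image hJs, by rw [card_image_of_injective J hf, hJc]⟩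
  · intro I hI
    obtain ⟨hIs, hIc⟩ := mem_powersetCard.1 hI
    have him : (s.filter (fun x => f x ∈ I)).image f = I := by
      ext y
      simp only [mem_image, mem_filter]
      constructor
      · rintro ⟨x, ⟨_, hx2⟩, rfl⟩; exact hx2
      · intro hy
        obtain ⟨x, hx, rfl⟩ := mem_image.1 (hIs hy)
        exact ⟨x, ⟨hx, hy⟩, rfl⟩
    refine mem_powersetCard.2 ⟨filter_subset _ _, ?_⟩
    rw [← card_image_of_injective _ hf, him, hIc]
  · intro J hJ
    obtain ⟨hJs, _⟩ := mem_powersetCard.1 hJ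
    ext x
    simp only [mem_filter, mem_image]
    constructor
    · rintro ⟨hxs, y, hyJ, hyx⟩
      rwa [← hf hyx]
    · intro hx
      exact ⟨hJs hx, x, hx, rfl⟩
  · intro I hI
    obtain ⟨hIs, _⟩ := mem_powersetCard.1 hI
    ext y
    simp only [mem_image, mem_filter]
    constructor
    · rintro ⟨x, ⟨_, hx2⟩, rfl⟩; exact hx2
    · intro hy
      obtain ⟨x, hx, rfl⟩ := mem_image.1 (hIs hy)
      exact ⟨x, ⟨hx, hy⟩, rfl⟩
  · intro J hJ; rfl

lemma final_transfer {N : ℕ} (hN : 1 ≤ N) (e : ℂ) (he : e ≠ 0)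
    (a : Fin N → ℂ) (b : Fin (N-1) → ℂ) (ha : Function.Injective a) (hb : Function.Injective b)
    (hd : ∀ i j, a i ≠ (e*e) * b j)
    (F1 : Fin N → Fin N → ℂ) (F2 : Fin N → Fin (N-1) → ℂ)
    (G1 : Fin (N-1) → Fin (N-1) → ℂ) (G2 : Fin (N-1) → Fin N → ℂ)
    (hF1 : ∀ i j, (a i - (e*e) * a j)/(a i - a j) = e * F1 i j)
    (hF2 : ∀ i j, (a i - b j)/(a i - (e*e) * b j) = e⁻¹ * F2 i j)
    (hG1 : ∀ i j, (b j - (e*e) * b i)/(b j - b i) = e * G1 i j)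
    (hG2 : ∀ i j, (a j - b i)/(a j - (e*e) * b i) = e⁻¹ * G2 i j)
    (r : ℕ) (hr : r + 1 ≤ N) :
    ∑ I ∈ (Finset.univ : Finset (Fin N)).powersetCard (r+1),
        (∏ i ∈ I, ∏ j ∈ Finset.univ \ I, F1 i j) * ∏ i ∈ I, ∏ j, F2 i j
    = (∑ I ∈ (Finset.univ : Finset (Fin (N-1))).powersetCard (r+1),
        (∏ i ∈ I, ∏ j ∈ Finset.univ \ I, G1 i j) * ∏ i ∈ I, ∏ j, G2 i j)
      + ∑ I ∈ (Finset.univ : Finset (Fin (N-1))).powersetCard r,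
        (∏ i ∈ I, ∏ j ∈ Finset.univ \ I, G1 i j) * ∏ i ∈ I, ∏ j, G2 i j := by
  set t : ℂ := e * e with htdef
  have ht : t ≠ 0 := mul_ne_zero he he
  set A : Finset ℂ := Finset.univ.image a with hAdef
  set B : Finset ℂ := Finset.univ.image b with hBdef
  have hAc : A.card = N := by
    rw [hAdef, card_image_of_injective _ ha, card_univ, Fintype.card_fin]
  have hBc : B.card = N - 1 := by
    rw [hBdef, card_image_of_injective _ hb, card_univ, Fintype.card_fin]
  have hHd : ∀ x ∈ A, ∀ y ∈ B, x ≠ t*y := by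
    intro x hx y hy
    obtain ⟨i, _, rfl⟩ := mem_image.1 hx
    obtain ⟨j, _, rfl⟩ := mem_image.1 hy
    exact hd i j
  -- transfer for S
  have hS : ∀ k : ℕ, k ≤ N → S t A B k
      = e ^ ((k:ℤ) - k*k) * ∑ I ∈ (Finset.univ : Finset (Fin N)).powersetCard k,
          (∏ i ∈ I, ∏ j ∈ Finset.univ \ I, F1 i j) * ∏ i ∈ I, ∏ j, F2 i j := by
    intro k hk
    rw [S, hAdef, sum_powersetCard_image _ a ha, Finset.mul_sum]
    refine sum_congr rfl fun I hI => ?_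
    obtain ⟨hIu, hIc⟩ := mem_powersetCard.1 hI
    have h1 : cc t (Finset.univ.image a) (I.image a)
        = e ^ (I.card * (Finset.univ \ I).card) * ∏ i ∈ I, ∏ j ∈ Finset.univ \ I, F1 i j := by
      unfold cc
      rw [show Finset.univ.image a \ I.image a = (Finset.univ \ I).image a from
        (Finset.image_sdiff Finset.univ I ha).symm, prod_prod_image a a ha ha]
      exact prod_prod_scale _ _ _ _ _ (fun i _ j _ => hF1 i j)
    have h2 : PP t B (I.image a)
        = e⁻¹ ^ (I.card * (N-1)) * ∏ i ∈ I, ∏ j, F2 i j := by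
      unfold PP
      rw [hBdef, prod_prod_image a b ha hb]
      rw [prod_prod_scale _ _ _ _ _ (fun i _ j _ => hF2 i j), card_univ, Fintype.card_fin]
    rw [h1, h2, card_sdiff_of_subset hIu, card_univ, Fintype.card_fin, hIc]
    have hz : (e:ℂ)^(k*(N-k)) * e⁻¹^(k*(N-1)) = e ^ ((k:ℤ) - k*k) := by
      rw [inv_pow, ← zpow_natCast e (k*(N-k)), ← zpow_natCast e (k*(N-1)), ← zpow_neg,
        ← zpow_add₀ he]
      congr 1
      rw [Nat.cast_mul, Nat.cast_mul, Nat.cast_sub hk, Nat.cast_sub hN]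
      push_cast
      ring
    calc e^(k*(N-k)) * (∏ i ∈ I, ∏ j ∈ Finset.univ \ I, F1 i j) *
          (e⁻¹^(k*(N-1)) * ∏ i ∈ I, ∏ j, F2 i j)
        = (e^(k*(N-k)) * e⁻¹^(k*(N-1))) *
            ((∏ i ∈ I, ∏ j ∈ Finset.univ \ I, F1 i j) * ∏ i ∈ I, ∏ j, F2 i j) := by ring
      _ = _ := by rw [hz]
  -- transfer for Sb
  have hSb : ∀ k : ℕ, Sb t A B k
      = e ^ (-(k:ℤ) - k*k) * ∑ I ∈ (Finset.univ : Finset (Fin (N-1))).powersetCard k,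
          (∏ i ∈ I, ∏ j ∈ Finset.univ \ I, G1 i j) * ∏ i ∈ I, ∏ j, G2 i j := by
    intro k
    rw [Sb, hBdef, sum_powersetCard_image _ b hb, Finset.mul_sum]
    refine sum_congr rfl fun I hI => ?_
    obtain ⟨hIu, hIc⟩ := mem_powersetCard.1 hI
    have hk : k ≤ N - 1 := by
      rw [← hIc]
      calc I.card ≤ (Finset.univ : Finset (Fin (N-1))).card := card_le_card hIu
        _ = N - 1 := by rw [card_univ, Fintype.card_fin]
    have h1 : cb t (Finset.univ.image b) (I.image b)
        = e ^ (I.card * (Finset.univ \ I).card) * ∏ i ∈ I, ∏ j ∈ Finset.univ \ I, G1 i j := by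
      unfold cb
      rw [show Finset.univ.image b \ I.image b = (Finset.univ \ I).image b from
        (Finset.image_sdiff Finset.univ I hb).symm, prod_prod_image b b hb hb]
      exact prod_prod_scale _ _ _ _ _ (fun i _ j _ => hG1 i j)
    have h2 : Pb t A (I.image b)
        = e⁻¹ ^ (I.card * N) * ∏ i ∈ I, ∏ j, G2 i j := by
      unfold Pb
      rw [hAdef, prod_prod_image b a hb ha]
      rw [prod_prod_scale _ _ _ _ _ (fun i _ j _ => hG2 i j), card_univ, Fintype.card_fin]
    rw [h1, h2, card_sdiff_of_subset hIu, card_univ, Fintype.card_fin, hIc]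
    have hz : (e:ℂ)^(k*((N-1)-k)) * e⁻¹^(k*N) = e ^ (-(k:ℤ) - k*k) := by
      rw [inv_pow, ← zpow_natCast e (k*((N-1)-k)), ← zpow_natCast e (k*N), ← zpow_neg,
        ← zpow_add₀ he]
      congr 1
      rw [Nat.cast_mul, Nat.cast_mul, Nat.cast_sub hk, Nat.cast_sub hN]
      push_cast
      ring
    calc e^(k*((N-1)-k)) * (∏ i ∈ I, ∏ j ∈ Finset.univ \ I, G1 i j) *
          (e⁻¹^(k*N) * ∏ i ∈ I, ∏ j, G2 i j)
        = (e^(k*((N-1)-k)) * e⁻¹^(k*N)) *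
            ((∏ i ∈ I, ∏ j ∈ Finset.univ \ I, G1 i j) * ∏ i ∈ I, ∏ j, G2 i j) := by ring
      _ = _ := by rw [hz]
  have hrect := (all_stmts (N-1)).2 t ht A B hHd hBc (by rw [hAc]; omega) r
  rw [hS (r+1) hr, hSb (r+1), hSb r] at hrect
  have htpow : (t:ℂ)^(r+1) * e^(-((r+1:ℕ):ℤ) - (r+1:ℕ)*(r+1:ℕ))
      = e^((((r+1):ℕ):ℤ) - (r+1:ℕ)*(r+1:ℕ)) := by
    rw [htdef, show ((e*e : ℂ))^(r+1) = e^(2*(r+1)) from by rw [← pow_two, ← pow_mul],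
      ← zpow_natCast e (2*(r+1)), ← zpow_add₀ he]
    congr 1
    push_cast
    ring
  have hc3 : (-(r:ℤ) - (r:ℤ)*(r:ℤ)) = ((((r+1):ℕ):ℤ) - ((r+1):ℕ)*((r+1):ℕ)) := by
    push_cast; ring
  have hrect2 : e ^ ((((r+1):ℕ):ℤ) - (r+1:ℕ)*(r+1:ℕ)) *
      (∑ I ∈ (Finset.univ : Finset (Fin N)).powersetCard (r+1),
        (∏ i ∈ I, ∏ j ∈ Finset.univ \ I, F1 i j) * ∏ i ∈ I, ∏ j, F2 i j)
      = e ^ ((((r+1):ℕ):ℤ) - (r+1:ℕ)*(r+1:ℕ)) *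
      ((∑ I ∈ (Finset.univ : Finset (Fin (N-1))).powersetCard (r+1),
        (∏ i ∈ I, ∏ j ∈ Finset.univ \ I, G1 i j) * ∏ i ∈ I, ∏ j, G2 i j)
      + ∑ I ∈ (Finset.univ : Finset (Fin (N-1))).powersetCard r,
        (∏ i ∈ I, ∏ j ∈ Finset.univ \ I, G1 i j) * ∏ i ∈ I, ∏ j, G2 i j) := by
    rw [mul_add, hrect, ← mul_assoc, htpow, hc3]
  exact mul_left_cancel₀ (zpow_ne_zero _ he) hrect2

end Bifund

open Finset in
/-- The `U(N)×U(N−1)` bifundamental intertwining identity: for every `0 ≤ r ≤ N`,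
`Σ_{|I|=r} c_I(μ) Π_I(μ,ν) = Σ_{|I|=r} c̄_I(ν) Π̄_I(μ,ν) + Σ_{|I|=r−1} c̄_I(ν) Π̄_I(μ,ν)`. -/
theorem bifundamental_intertwiner_UN_UNm1 (N : ℕ) (hN : 1 ≤ N) (κ η : ℂ)
    (hκ : κ ≠ 0) (hη : η ≠ 0) (μ : Fin N → ℂ) (ν : Fin (N - 1) → ℂ)
    (hμ : Function.Injective μ) (hν : Function.Injective ν)
    (hgen : ∀ (i : Fin N) (j : Fin (N - 1)), κ * η⁻¹ * μ i ≠ κ⁻¹ * ν j)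
    (r : ℕ) (hr : r ≤ N) :
    ∑ I ∈ Finset.powersetCard r (Finset.univ : Finset (Fin N)),
      (∏ i ∈ I, ∏ j ∈ Iᶜ, (κ * η⁻¹ * μ i - η * κ⁻¹ * μ j) / (μ i - μ j)) *
        ∏ i ∈ I, ∏ j : Fin (N - 1), (μ i - η⁻¹ * ν j) / (κ * η⁻¹ * μ i - κ⁻¹ * ν j) =
    (∑ I ∈ Finset.powersetCard r (Finset.univ : Finset (Fin (N - 1))),
      (∏ i ∈ I, ∏ j ∈ Iᶜ, (κ * η⁻¹ * ν j - η * κ⁻¹ * ν i) / (ν j - ν i)) *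
        ∏ i ∈ I, ∏ j : Fin N, (μ j - η⁻¹ * ν i) / (κ * η⁻¹ * μ j - κ⁻¹ * ν i)) +
    ∑ I ∈ Finset.filter (fun I => I.card + 1 = r)
        (Finset.powerset (Finset.univ : Finset (Fin (N - 1)))),
      (∏ i ∈ I, ∏ j ∈ Iᶜ, (κ * η⁻¹ * ν j - η * κ⁻¹ * ν i) / (ν j - ν i)) *
        ∏ i ∈ I, ∏ j : Fin N, (μ j - η⁻¹ * ν i) / (κ * η⁻¹ * μ j - κ⁻¹ * ν i) := by
  have he : (η * κ⁻¹ : ℂ) ≠ 0 := mul_ne_zero hη (inv_ne_zero hκ)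
  have hke : (κ * η⁻¹ : ℂ) ≠ 0 := mul_ne_zero hκ (inv_ne_zero hη)
  cases r with
  | zero =>
    rw [Finset.powersetCard_zero, Finset.powersetCard_zero, Finset.sum_singleton,
      Finset.sum_singleton, Finset.prod_empty, Finset.prod_empty, Finset.prod_empty,
      Finset.prod_empty,
      Finset.filter_false_of_mem (fun I _ => by omega), Finset.sum_empty]
    norm_num
  | succ s =>
    have hfil : Finset.filter (fun I => I.card + 1 = s+1)
        (Finset.powerset (Finset.univ : Finset (Fin (N-1))))
        = Finset.powersetCard s (Finset.univ : Finset (Fin (N-1))) := by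
      ext I
      simp only [Finset.mem_filter, Finset.mem_powerset, Finset.mem_powersetCard]
      constructor
      · rintro ⟨h1, h2⟩; exact ⟨h1, by omega⟩
      · rintro ⟨h1, h2⟩; exact ⟨h1, by omega⟩
    rw [hfil]
    simp only [Finset.compl_eq_univ_sdiff]
    have aux1 : ∀ x c y : ℂ, x/(c*y) = c⁻¹ * (x/y) := by
      intro x c y
      rw [mul_comm c y, ← div_div, div_eq_mul_inv, mul_comm]
    have hainj : Function.Injective (fun i : Fin N => κ * η⁻¹ * μ i) := by
      intro x y h
      exact hμ (mul_left_cancel₀ hke h)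
    have hbinj : Function.Injective (fun j : Fin (N-1) => κ * η⁻¹ * η⁻¹ * ν j) := by
      intro x y h
      exact hν (mul_left_cancel₀ (mul_ne_zero hke (inv_ne_zero hη)) h)
    have htb : ∀ j : Fin (N-1), ((η*κ⁻¹)*(η*κ⁻¹)) * (κ * η⁻¹ * η⁻¹ * ν j) = κ⁻¹ * ν j := by
      intro j
      field_simp
    refine Bifund.final_transfer hN (η*κ⁻¹) he
      (fun i => κ * η⁻¹ * μ i) (fun j => κ * η⁻¹ * η⁻¹ * ν j) hainj hbinj
      (fun i j => ?_)
      (fun i j => (κ * η⁻¹ * μ i - η * κ⁻¹ * μ j) / (μ i - μ j))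
      (fun i j => (μ i - η⁻¹ * ν j) / (κ * η⁻¹ * μ i - κ⁻¹ * ν j))
      (fun i j => (κ * η⁻¹ * ν j - η * κ⁻¹ * ν i) / (ν j - ν i))
      (fun i j => (μ j - η⁻¹ * ν i) / (κ * η⁻¹ * μ j - κ⁻¹ * ν i))
      (fun i j => ?_) (fun i j => ?_) (fun i j => ?_) (fun i j => ?_) s hr
    · -- separation
      intro h
      apply hgen i j
      have h' : κ * η⁻¹ * μ i = η * κ⁻¹ * (η * κ⁻¹) * (κ * η⁻¹ * η⁻¹ * ν j) := h
      rw [h', htb j]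
    · -- hF1
      have h1 : κ*η⁻¹*μ i - ((η*κ⁻¹)*(η*κ⁻¹))*(κ*η⁻¹*μ j) = κ*η⁻¹*μ i - η*κ⁻¹*μ j := by
        field_simp
      have h2 : κ*η⁻¹*μ i - κ*η⁻¹*μ j = (κ*η⁻¹)*(μ i - μ j) := by ring
      rw [h1, h2, aux1]
      congr 1
      rw [mul_inv, inv_inv, mul_comm]
    · -- hF2
      have h1 : κ*η⁻¹*μ i - κ*η⁻¹*η⁻¹*ν j = (κ*η⁻¹)*(μ i - η⁻¹*ν j) := by ring
      have h2 : κ*η⁻¹*μ i - ((η*κ⁻¹)*(η*κ⁻¹))*(κ*η⁻¹*η⁻¹*ν j) = κ*η⁻¹*μ i - κ⁻¹*ν j := by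
        rw [htb j]
      rw [h1, h2, mul_div_assoc]
      congr 1
      rw [mul_inv, inv_inv, mul_comm]
    · -- hG1
      have h1 : κ*η⁻¹*η⁻¹*ν j - ((η*κ⁻¹)*(η*κ⁻¹))*(κ*η⁻¹*η⁻¹*ν i)
          = η⁻¹*(κ*η⁻¹*ν j - η*κ⁻¹*ν i) := by
        rw [htb i]
        field_simp
      have h2 : κ*η⁻¹*η⁻¹*ν j - κ*η⁻¹*η⁻¹*ν i = (κ*η⁻¹*η⁻¹)*(ν j - ν i) := by ring
      rw [h1, h2, mul_div_mul_comm]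
      congr 1
      field_simp
    · -- hG2
      have h1 : κ*η⁻¹*μ j - κ*η⁻¹*η⁻¹*ν i = (κ*η⁻¹)*(μ j - η⁻¹*ν i) := by ring
      have h2 : κ*η⁻¹*μ j - ((η*κ⁻¹)*(η*κ⁻¹))*(κ*η⁻¹*η⁻¹*ν i) = κ*η⁻¹*μ j - κ⁻¹*ν i := by
        rw [htb i]
      rw [h1, h2, mul_div_assoc]
      congr 1
      rw [mul_inv, inv_inv, mul_comm]
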